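/- arXiv:1008.0828 — 2 statements merged into one kernel-verified Lean document; each statement's English description precedes it below -/
import Mathlib

section
/- Let γ ≤ α be compositions of n (γ refines α). Then Σ_{β : γ ≤ β ≤ α} (-1)^{ℓ(α)-ℓ(β)} q^{ℓ(α)-ℓ(β) + doff_β(DP(γ)) - doff_{rev(α)}(DP(rev(β)))} equals 1 if γ = α and 0 if γ < α, as an identity of Laurent polynomials in q. -/
open Finset MvPolynomial

noncomputable section

/-- Base field `F = ℚ(q)`. -/
abbrev F : Type := RatFunc ℚ

/-- The parameter `q`. -/
noncomputable def q : F := RatFunc.X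

/-- The ring of symmetric functions `Λ = F[p₁, p₂, p₃, …]`, where the variable
`X k` represents the power sum `p_{k+1}`. -/
abbrev SymF : Type := MvPolynomial ℕ F

/-- `pp k` is the power sum `p_k` for `k ≥ 1`. -/
noncomputable def pp (k : ℕ) : SymF := MvPolynomial.X (k - 1)

/-- Complete homogeneous symmetric functions, via Newton's identity
`(n+1) h_{n+1} = ∑_{k=1}^{n+1} p_k h_{n+1-k}`. -/
noncomputable def hN : ℕ → SymF
  | 0 => 1
  | n + 1 => ((n : F) + 1)⁻¹ • ∑ k ∈ Finset.range (n + 1), pp (k + 1) * hN (n - k)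
  termination_by n => n
  decreasing_by omega

/-- Elementary symmetric functions, via Newton's identity
`(n+1) e_{n+1} = ∑_{k=1}^{n+1} (-1)^{k-1} p_k e_{n+1-k}`. -/
noncomputable def eN : ℕ → SymF
  | 0 => 1
  | n + 1 => ((n : F) + 1)⁻¹ • ∑ k ∈ Finset.range (n + 1), ((-1 : F) ^ k) • (pp (k + 1) * eN (n - k))
  termination_by n => n
  decreasing_by omega

/-- `hh m = h_m` for `m ≥ 0` and `0` for `m < 0`. -/
noncomputable def hh (m : ℤ) : SymF := if 0 ≤ m then hN m.toNat else 0

/-- `ee m = e_m` for `m ≥ 0` and `0` for `m < 0`. -/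
noncomputable def ee (m : ℤ) : SymF := if 0 ≤ m then eN m.toNat else 0

/-- The plethystic translation `f[X] ↦ f[X + (1-q)z]`, determined by
`p_k ↦ p_k + (1-q^k) z^k`.  The coefficient of `z^r` computes `h_r[X(1-q)]^⊥ f`. -/
noncomputable def Tq : SymF →ₐ[F] Polynomial SymF :=
  MvPolynomial.aeval fun k =>
    Polynomial.C (MvPolynomial.X k) +
      Polynomial.C (MvPolynomial.C (1 - q ^ (k + 1))) * Polynomial.X ^ (k + 1)

/-- The operator `h_r[X(1-q)]^⊥`. -/
noncomputable def Dq (r : ℕ) (P : SymF) : SymF := (Tq P).coeff r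

/-- The plethystic translation `f[X] ↦ f[X - z]`, determined by `p_k ↦ p_k - z^k`;
one has `f[X - z] = ∑_k (-z)^k (e_k^⊥ f)[X]`. -/
noncomputable def T1 : SymF →ₐ[F] Polynomial SymF :=
  MvPolynomial.aeval fun k =>
    Polynomial.C (MvPolynomial.X k) - Polynomial.X ^ (k + 1)

/-- The operator `e_r^⊥`. -/
noncomputable def eperp (r : ℕ) (P : SymF) : SymF := ((-1 : F) ^ r) • (T1 P).coeff r

/-- The Hall–Littlewood creation operator
`ℂ_m P = (-1/q)^{m-1} ∑_{r ≥ 0} q^{-r} h_{m+r} · (h_r[X(1-q)])^⊥ P`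
(the sum is finite: terms with `r > deg_z (Tq P)` vanish). -/
noncomputable def Cop (m : ℤ) (P : SymF) : SymF :=
  ((-q⁻¹ : F) ^ (m - 1)) •
    ∑ r ∈ Finset.range ((Tq P).natDegree + 1), ((q⁻¹ : F) ^ r) • (hh (m + r) * Dq r P)

/-- The creation operator `𝔹_m P = ∑_{r ≥ 0} (-1)^r e_{m+r} · (h_r[X(1-q)])^⊥ P`. -/
noncomputable def Bop (m : ℤ) (P : SymF) : SymF :=
  ∑ r ∈ Finset.range ((Tq P).natDegree + 1), ((-1 : F) ^ r) • (ee (m + r) * Dq r P)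

/-- The Bernstein (Schur) creation operator `S_m P = ∑_{r ≥ 0} (-1)^r h_{m+r} · e_r^⊥ P`. -/
noncomputable def Sop (m : ℤ) (P : SymF) : SymF :=
  ∑ r ∈ Finset.range ((T1 P).natDegree + 1), ((-1 : F) ^ r) • (hh (m + r) * eperp r P)

/-- `C_α[X;q] = ℂ_{α₁} ℂ_{α₂} ⋯ ℂ_{α_ℓ}(1)`. -/
noncomputable def Cfun : List ℕ → SymF
  | [] => 1
  | a :: l => Cop a (Cfun l)

/-- `B_α[X;q] = 𝔹_{α_ℓ} 𝔹_{α_{ℓ-1}} ⋯ 𝔹_{α₁}(1)`. -/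
noncomputable def Bfun (l : List ℕ) : SymF := l.foldl (fun acc a => Bop a acc) 1

end

/-- The touch set `{0} ∪ Des(c)` of a composition `c` of `n`:
the set of partial sums `c₁ + ⋯ + c_i` for `0 ≤ i < ℓ(c)` (0-based touch rows). -/
def touchSet {n : ℕ} (c : Composition n) : Finset ℕ :=
  (Finset.range c.length).image fun i => c.sizeUpTo i

/-- The descent set of a composition: its proper nonzero partial sums. -/
def DesSet {n : ℕ} (c : Composition n) : Finset ℕ := (touchSet c).erase 0

/-- `Refines β α` means `β ≤ α`: `β` is finer than `α`, i.e. `Des(α) ⊆ Des(β)`. -/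
abbrev Refines {n : ℕ} (β α : Composition n) : Prop := touchSet α ⊆ touchSet β

/-- `doffC α β = doff_α(DP(β))` for `β ≤ α`:
`∑_{k=1}^{ℓ(α)} (ℓ(α)-k) r_k` where `r_k` is the number of parts of `β`
lying inside the `k`-th part of `α`. -/
def doffC {n : ℕ} (α β : Composition n) : ℕ :=
  ∑ k ∈ Finset.range α.length,
    (α.length - 1 - k) *
      ((touchSet β).filter fun s => α.sizeUpTo k ≤ s ∧ s < α.sizeUpTo (k + 1)).card

/-- The reversed composition. -/
def revC {n : ℕ} (c : Composition n) : Composition n :=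
  ⟨c.blocks.reverse, fun hi => c.blocks_pos (List.mem_reverse.mp hi), by
    rw [List.sum_reverse]; exact c.blocks_sum⟩

/-- A Dyck path from `(0,0)` to `(n,n)`, encoded by its arm sequence:
`arm i` is the number of cells between the path and the diagonal in row `i+1`
(rows are 0-indexed here). -/
structure DyckPath (n : ℕ) where
  arm : ℕ → ℕ
  arm_zero : 0 < n → arm 0 = 0
  arm_step : ∀ i, i + 1 < n → arm (i + 1) ≤ arm i + 1
  arm_outside : ∀ i, n ≤ i → arm i = 0

/-- `area(D) = ∑ᵢ aᵢ`. -/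
def area {n : ℕ} (D : DyckPath n) : ℕ := ∑ i ∈ Finset.range n, D.arm i

/-- `dinv(D) = #{(i,j) : i < j, aᵢ - aⱼ ∈ {0,1}}`. -/
def dinv {n : ℕ} (D : DyckPath n) : ℕ :=
  ((Finset.range n ×ˢ Finset.range n).filter fun p =>
      p.1 < p.2 ∧ (D.arm p.1 = D.arm p.2 ∨ D.arm p.1 = D.arm p.2 + 1)).card

/-- `IsTouch D α` says that `touch(D) = α`: the rows where the arm vanishes are
exactly the partial sums of `α`. -/
def IsTouch {n : ℕ} (D : DyckPath n) (α : Composition n) : Prop :=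
  ∀ i < n, (D.arm i = 0 ↔ i ∈ touchSet α)

/-- `doff_α(D)`, for a path `D` whose touch composition refines `α`. -/
def doffD {n : ℕ} (α : Composition n) (D : DyckPath n) : ℕ :=
  ∑ k ∈ Finset.range α.length,
    (α.length - 1 - k) *
      ((Finset.Ico (α.sizeUpTo k) (α.sizeUpTo (k + 1))).filter fun i => D.arm i = 0).card

instance {n : ℕ} : DecidableEq (Composition n) := fun a b =>
  decidable_of_iff (a.blocks = b.blocks) ⟨fun h => by cases a; cases b; simpa using h,
    fun h => by rw [h]⟩

noncomputable section

/-- Plethystic evaluation at the alphabet `1 - q`: the algebra map `p_k ↦ 1 - q^k`. -/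
noncomputable def evOneMinusQ : SymF →ₐ[F] F := MvPolynomial.aeval fun k => 1 - q ^ (k + 1)

/-- The cells of the Young diagram of a partition given as a (weakly decreasing)
list of parts: `(i, j)` with `j < lᵢ` (row `i`, column `j`, both 0-based). -/
def pcells (l : List ℕ) : Finset (ℕ × ℕ) :=
  (Finset.range l.length ×ˢ Finset.range (l.foldr max 0)).filter fun c => c.2 < l.getD c.1 0

/-- The arm of a cell: number of cells strictly to its right in its row. -/
def armC (l : List ℕ) (c : ℕ × ℕ) : ℕ := l.getD c.1 0 - c.2 - 1

/-- The leg of a cell: number of cells of the diagram in its column in later rows. -/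
def legC (l : List ℕ) (c : ℕ × ℕ) : ℕ :=
  ((Finset.Ico (c.1 + 1) l.length).filter fun i => c.2 < l.getD i 0).card

/-- The `k`-th part (`k ≥ 1`) of the conjugate partition: `μ'_k = #{i : μᵢ ≥ k}`. -/
def conjPart (l : List ℕ) (k : ℕ) : ℕ := l.countP fun x => k ≤ x

/-- The multiplicity `m_i(μ')` of `i` among the parts of the conjugate partition. -/
def mConj (l : List ℕ) (i : ℕ) : ℕ :=
  ((Finset.Icc 1 l.headI).filter fun k => conjPart l k = i).card

/-- `n(μ') = ∑ (k-1) μ'_k`. -/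
def nConj (l : List ℕ) : ℕ := ∑ k ∈ Finset.Icc 1 l.headI, (k - 1) * conjPart l k

/-- The `q`-Pochhammer symbol `(q;q)_k = ∏_{j=1}^k (1 - q^j)` as an element of `F`. -/
noncomputable def qpoch (k : ℕ) : F := ∏ j ∈ Finset.Icc 1 k, (1 - q ^ j)

end

section Stmt11Aux

open Finset
open Fin.NatCast

variable {n : ℕ}

lemma mem_touchSet {c : Composition n} {s : ℕ} :
    s ∈ touchSet c ↔ ∃ i, i < c.length ∧ c.sizeUpTo i = s := by
  simp [touchSet]

lemma sizeUpTo_lt_n (c : Composition n) {i : ℕ} (h : i < c.length) : c.sizeUpTo i < n :=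
  lt_of_lt_of_le (c.sizeUpTo_strict_mono h) (c.sizeUpTo_le _)

lemma touch_lt {c : Composition n} {s : ℕ} (hs : s ∈ touchSet c) : s < n := by
  rcases mem_touchSet.mp hs with ⟨i, hi, rfl⟩
  exact sizeUpTo_lt_n c hi

lemma sizeUpTo_lt_sizeUpTo (c : Composition n) {i j : ℕ} (hij : i < j) (hj : j ≤ c.length) :
    c.sizeUpTo i < c.sizeUpTo j :=
  lt_of_lt_of_le (c.sizeUpTo_strict_mono (lt_of_lt_of_le hij hj)) (c.monotone_sizeUpTo hij)

lemma sizeUpTo_injOn (c : Composition n) {i j : ℕ} (hi : i < c.length) (hj : j < c.length)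
    (h : c.sizeUpTo i = c.sizeUpTo j) : i = j := by
  rcases lt_trichotomy i j with hlt | heq | hgt
  · exact absurd h (Nat.ne_of_lt (sizeUpTo_lt_sizeUpTo c hlt hj.le))
  · exact heq
  · exact absurd h.symm (Nat.ne_of_lt (sizeUpTo_lt_sizeUpTo c hgt hi.le))

lemma card_touchSet (c : Composition n) : (touchSet c).card = c.length := by
  rw [touchSet, Finset.card_image_of_injOn, Finset.card_range]
  intro i hi j hj h
  simp only [Finset.coe_range, Set.mem_Iio] at hi hj
  exact sizeUpTo_injOn c hi hj h

lemma length_pos (hn : 0 < n) (c : Composition n) : 0 < c.length := by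
  rcases Nat.eq_zero_or_pos c.length with h | h
  · exfalso
    have hb : c.blocks = [] := List.length_eq_zero_iff.mp h
    have hs := c.blocks_sum
    rw [hb, List.sum_nil] at hs
    omega
  · exact h

lemma zero_mem_touchSet (hn : 0 < n) (c : Composition n) : 0 ∈ touchSet c :=
  mem_touchSet.mpr ⟨0, length_pos hn c, c.sizeUpTo_zero⟩

lemma boundary_val (c : Composition n) (i : Fin (c.length + 1)) :
    (c.boundary i : ℕ) = c.sizeUpTo i := rfl

lemma boundaries_eq (c : Composition n) :
    c.boundaries = insert (Fin.last n) ((touchSet c).image (Nat.cast : ℕ → Fin (n+1))) := by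
  ext j
  simp only [Composition.boundaries, Finset.mem_map, Finset.mem_univ, true_and,
    Finset.mem_insert, Finset.mem_image, mem_touchSet]
  constructor
  · rintro ⟨i, rfl⟩
    rcases eq_or_lt_of_le (Nat.lt_succ_iff.mp i.isLt) with h | h
    · left
      have : i = Fin.last c.length := Fin.ext h
      rw [this]
      exact c.boundary_last
    · right
      refine ⟨c.sizeUpTo i, ⟨i, h, rfl⟩, ?_⟩
      apply Fin.ext
      rw [Fin.val_natCast, Nat.mod_eq_of_lt (Nat.lt_succ_of_le (c.sizeUpTo_le i))]
      rfl
  · rintro (rfl | ⟨s, ⟨i, hi, rfl⟩, rfl⟩)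
    · exact ⟨Fin.last c.length, c.boundary_last⟩
    · refine ⟨⟨i, Nat.lt_succ_of_lt hi⟩, ?_⟩
      apply Fin.ext
      rw [Fin.val_natCast, Nat.mod_eq_of_lt (Nat.lt_succ_of_le (c.sizeUpTo_le i))]
      rfl

lemma last_not_mem_image {X : Finset ℕ} (hX : ∀ s ∈ X, s < n) :
    Fin.last n ∉ X.image (Nat.cast : ℕ → Fin (n+1)) := by
  intro h
  rcases Finset.mem_image.mp h with ⟨s, hs, hcast⟩
  have hv := congrArg Fin.val hcast
  rw [Fin.val_natCast, Nat.mod_eq_of_lt (Nat.lt_succ_of_lt (hX s hs)), Fin.val_last] at hv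
  exact absurd hv (Nat.ne_of_lt (hX s hs))

lemma image_cast_inj {X Y : Finset ℕ} (hX : ∀ s ∈ X, s < n) (hY : ∀ s ∈ Y, s < n)
    (h : X.image (Nat.cast : ℕ → Fin (n+1)) = Y.image (Nat.cast : ℕ → Fin (n+1))) : X = Y := by
  ext s
  constructor
  · intro hs
    have : (s : Fin (n+1)) ∈ Y.image (Nat.cast : ℕ → Fin (n+1)) := by
      rw [← h]; exact Finset.mem_image_of_mem _ hs
    rcases Finset.mem_image.mp this with ⟨t, ht, hts⟩
    have : t = s := by
      have := congrArg (Fin.val) hts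
      rwa [Fin.val_natCast, Fin.val_natCast, Nat.mod_eq_of_lt (Nat.lt_succ_of_lt (hY t ht)),
        Nat.mod_eq_of_lt (Nat.lt_succ_of_lt (hX s hs))] at this
    rwa [← this]
  · intro hs
    have : (s : Fin (n+1)) ∈ X.image (Nat.cast : ℕ → Fin (n+1)) := by
      rw [h]; exact Finset.mem_image_of_mem _ hs
    rcases Finset.mem_image.mp this with ⟨t, ht, hts⟩
    have : t = s := by
      have := congrArg (Fin.val) hts
      rwa [Fin.val_natCast, Fin.val_natCast, Nat.mod_eq_of_lt (Nat.lt_succ_of_lt (hX t ht)),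
        Nat.mod_eq_of_lt (Nat.lt_succ_of_lt (hY s hs))] at this
    rwa [← this]

lemma touchSet_injective {a b : Composition n} (h : touchSet a = touchSet b) : a = b := by
  have hb : a.boundaries = b.boundaries := by
    rw [boundaries_eq, boundaries_eq, h]
  have h2 : a.toCompositionAsSet = b.toCompositionAsSet := by
    apply CompositionAsSet.ext
    rw [Composition.toCompositionAsSet_boundaries, Composition.toCompositionAsSet_boundaries, hb]
  have h3 : a.blocks = b.blocks := by
    rw [← Composition.toCompositionAsSet_blocks, h2, Composition.toCompositionAsSet_blocks]
  exact Composition.ext h3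

/-- A composition of `n` with prescribed touch set. -/
def ofT (n : ℕ) (S : Finset ℕ) : Composition n :=
  CompositionAsSet.toComposition
    { boundaries := insert 0 (insert (Fin.last n)
        ((S.filter (· < n)).image (Nat.cast : ℕ → Fin (n+1))))
      zero_mem := Finset.mem_insert_self _ _
      getLast_mem := Finset.mem_insert_of_mem (Finset.mem_insert_self _ _) }

lemma touchSet_ofT {S : Finset ℕ} (h0 : 0 ∈ S) (hlt : ∀ s ∈ S, s < n) :
    touchSet (ofT n S) = S := by
  have hfil : S.filter (· < n) = S := Finset.filter_true_of_mem hlt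
  have hb : (ofT n S).boundaries
      = insert 0 (insert (Fin.last n) (S.image (Nat.cast : ℕ → Fin (n+1)))) := by
    rw [ofT, CompositionAsSet.toComposition_boundaries]
    show insert 0 (insert (Fin.last n)
        ((S.filter (· < n)).image (Nat.cast : ℕ → Fin (n+1)))) = _
    rw [hfil]
  have h0' : (0 : Fin (n+1)) ∈ S.image (Nat.cast : ℕ → Fin (n+1)) :=
    Finset.mem_image.mpr ⟨0, h0, by simp⟩
  rw [boundaries_eq, Finset.insert_comm,
    Finset.insert_eq_self.mpr h0'] at hb
  have hl1 := last_not_mem_image (X := touchSet (ofT n S)) (fun s hs => touch_lt hs)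
  have hl2 := last_not_mem_image hlt
  apply image_cast_inj (fun s hs => touch_lt hs) hlt
  calc (touchSet (ofT n S)).image (Nat.cast : ℕ → Fin (n+1))
      = (insert (Fin.last n)
          ((touchSet (ofT n S)).image (Nat.cast : ℕ → Fin (n+1)))).erase (Fin.last n) :=
        (Finset.erase_insert hl1).symm
    _ = (insert (Fin.last n) (S.image (Nat.cast : ℕ → Fin (n+1)))).erase (Fin.last n) := by
        rw [hb]
    _ = S.image (Nat.cast : ℕ → Fin (n+1)) := Finset.erase_insert hl2

/-- `NN X Y` counts pairs `(s,t) ∈ X × Y` with `s < t`. -/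
def NN (X Y : Finset ℕ) : ℕ := ∑ s ∈ X, (Y.filter fun t => s < t).card

lemma NN_union_left {X Y Z : Finset ℕ} (h : Disjoint X Y) :
    NN (X ∪ Y) Z = NN X Z + NN Y Z := Finset.sum_union h

lemma NN_union_right {X Y Z : Finset ℕ} (h : Disjoint Y Z) :
    NN X (Y ∪ Z) = NN X Y + NN X Z := by
  unfold NN
  rw [← Finset.sum_add_distrib]
  refine Finset.sum_congr rfl fun s _ => ?_
  rw [Finset.filter_union, Finset.card_union_of_disjoint (Finset.disjoint_filter_filter h)]

lemma NN_swap (X Y : Finset ℕ) : NN X Y = ∑ t ∈ Y, (X.filter fun s => s < t).card := by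
  unfold NN
  simp_rw [Finset.card_filter]
  rw [Finset.sum_comm]

lemma NN_insert_zero_right (X Y : Finset ℕ) : NN X (insert 0 Y) = NN X Y := by
  unfold NN
  refine Finset.sum_congr rfl fun s _ => ?_
  congr 1
  rw [Finset.filter_insert]
  simp

lemma NN_insert_zero_left {X : Finset ℕ} (Y : Finset ℕ) (h0 : 0 ∉ X) :
    NN (insert 0 X) Y = (Y.filter fun t => 0 < t).card + NN X Y := by
  unfold NN
  rw [Finset.sum_insert h0]

lemma NN_insert_top {X Y : Finset ℕ} (hX : ∀ x ∈ X, x < n) (hY : ∀ y ∈ Y, y < n) :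
    NN (insert n X) (insert n Y) = NN X Y + X.card := by
  have hnX : n ∉ X := fun h => lt_irrefl n (hX n h)
  have hnY : n ∉ Y := fun h => lt_irrefl n (hY n h)
  unfold NN
  rw [Finset.sum_insert hnX]
  have h1 : ((insert n Y).filter fun t => n < t).card = 0 := by
    rw [Finset.card_eq_zero, Finset.filter_eq_empty_iff]
    intro t ht
    rcases Finset.mem_insert.mp ht with rfl | ht'
    · omega
    · have := hY t ht'; omega
  have h2 : ∀ s ∈ X, ((insert n Y).filter fun t => s < t).card
      = (Y.filter fun t => s < t).card + 1 := by
    intro s hs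
    rw [Finset.filter_insert, if_pos (hX s hs),
      Finset.card_insert_of_notMem fun h => hnY (Finset.mem_of_mem_filter _ h)]
  rw [h1, Finset.sum_congr rfl h2, Finset.sum_add_distrib, Finset.sum_const, smul_eq_mul,
    mul_one]
  omega

lemma NN_rev {X Y : Finset ℕ} (hX : ∀ x ∈ X, x ≤ n) (hY : ∀ y ∈ Y, y ≤ n) :
    NN (X.image (fun v => n - v)) (Y.image (fun v => n - v)) = NN Y X := by
  have key : ∀ x ∈ X, ((Y.image (fun v => n - v)).filter fun t => n - x < t).card
      = (Y.filter fun s => s < x).card := by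
    intro x hx
    rw [Finset.filter_image, Finset.card_image_of_injOn (fun a ha b hb h => by
      simp only [Finset.coe_filter, Set.mem_setOf_eq] at ha hb
      have h' : n - a = n - b := h
      have := hY a ha.1; have := hY b hb.1; omega)]
    congr 1
    refine Finset.filter_congr fun y hy => ?_
    have h1 := hY y hy
    have h2 := hX x hx
    constructor <;> intro h <;> omega
  calc NN (X.image (fun v => n - v)) (Y.image (fun v => n - v))
      = ∑ x ∈ X, ((Y.image (fun v => n - v)).filter fun t => n - x < t).card := by
        unfold NN
        exact Finset.sum_image (fun a ha b hb h => by
          have h' : n - a = n - b := h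
          have := hX a ha; have := hX b hb; omega)
    _ = ∑ x ∈ X, (Y.filter fun s => s < x).card := Finset.sum_congr rfl key
    _ = NN Y X := (NN_swap Y X).symm

lemma doff_eq (A B : Composition n) : doffC A B = NN (touchSet B) (touchSet A) := by
  unfold doffC
  have step1 : ∀ k ∈ Finset.range A.length,
      (A.length - 1 - k) *
        ((touchSet B).filter fun s => A.sizeUpTo k ≤ s ∧ s < A.sizeUpTo (k+1)).card
      = ∑ s ∈ touchSet B,
          if A.sizeUpTo k ≤ s ∧ s < A.sizeUpTo (k+1) then A.length - 1 - k else 0 := by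
    intro k _
    rw [← Finset.sum_filter, Finset.sum_const, smul_eq_mul, mul_comm]
  rw [Finset.sum_congr rfl step1, Finset.sum_comm]
  unfold NN
  refine Finset.sum_congr rfl fun s hs => ?_
  have hsn : s < n := touch_lt hs
  have hk0lt : ((A.index ⟨s, hsn⟩ : ℕ)) < A.length := (A.index ⟨s, hsn⟩).isLt
  set k0 : ℕ := (A.index ⟨s, hsn⟩ : ℕ) with hk0
  have hle : A.sizeUpTo k0 ≤ s := A.sizeUpTo_index_le ⟨s, hsn⟩
  have hlt : s < A.sizeUpTo (k0 + 1) := A.lt_sizeUpTo_index_succ ⟨s, hsn⟩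
  have hL : (∑ k ∈ Finset.range A.length,
      if A.sizeUpTo k ≤ s ∧ s < A.sizeUpTo (k+1) then A.length - 1 - k else 0)
      = A.length - 1 - k0 := by
    rw [Finset.sum_eq_single_of_mem k0 (Finset.mem_range.mpr hk0lt)]
    · rw [if_pos ⟨hle, hlt⟩]
    · intro k hk hne
      rw [Finset.mem_range] at hk
      rw [if_neg]
      rintro ⟨h1, h2⟩
      rcases lt_or_gt_of_ne hne with hlt' | hgt'
      · have : A.sizeUpTo (k+1) ≤ A.sizeUpTo k0 := A.monotone_sizeUpTo hlt'
        omega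
      · have : A.sizeUpTo (k0+1) ≤ A.sizeUpTo k := A.monotone_sizeUpTo hgt'
        omega
  rw [hL]
  have hinj : Set.InjOn A.sizeUpTo ((Finset.range A.length).filter fun i => s < A.sizeUpTo i) := by
    intro i hi j hj h
    simp only [Finset.coe_filter, Set.mem_setOf_eq, Finset.mem_range] at hi hj
    exact sizeUpTo_injOn A hi.1 hj.1 h
  rw [touchSet, Finset.filter_image, Finset.card_image_of_injOn hinj]
  have hico : (Finset.range A.length).filter (fun i => s < A.sizeUpTo i)
      = Finset.Ico (k0+1) A.length := by
    ext i
    simp only [Finset.mem_filter, Finset.mem_range, Finset.mem_Ico]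
    constructor
    · rintro ⟨h1, h2⟩
      refine ⟨?_, h1⟩
      by_contra hcon
      push_neg at hcon
      have : A.sizeUpTo i ≤ A.sizeUpTo k0 := A.monotone_sizeUpTo (by omega)
      omega
    · rintro ⟨h1, h2⟩
      exact ⟨h2, lt_of_lt_of_le hlt (A.monotone_sizeUpTo h1)⟩
  rw [hico, Nat.card_Ico]
  omega

lemma touchSet_eq_insert (hn : 0 < n) (c : Composition n) :
    touchSet c = insert 0 (DesSet c) := (Finset.insert_erase (zero_mem_touchSet hn c)).symm

lemma zero_not_mem_DesSet (c : Composition n) : 0 ∉ DesSet c := Finset.notMem_erase _ _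

lemma DesSet_lt {c : Composition n} {s : ℕ} (hs : s ∈ DesSet c) : s < n :=
  touch_lt (Finset.mem_of_mem_erase hs)

lemma card_DesSet (hn : 0 < n) (c : Composition n) : (DesSet c).card = c.length - 1 := by
  rw [DesSet, Finset.card_erase_of_mem (zero_mem_touchSet hn c), card_touchSet]

lemma doffC_split (hn : 0 < n) (A B : Composition n) :
    doffC A B = NN (DesSet B) (DesSet A) + (DesSet A).card := by
  rw [doff_eq, touchSet_eq_insert hn A, touchSet_eq_insert hn B, NN_insert_zero_right,
    NN_insert_zero_left _ (zero_not_mem_DesSet B)]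
  rw [Finset.filter_true_of_mem fun t ht =>
    Nat.pos_of_ne_zero fun h => zero_not_mem_DesSet A (h ▸ ht)]
  omega

lemma sizeUpTo_rev (c : Composition n) (i : ℕ) :
    (revC c).sizeUpTo i = n - c.sizeUpTo (c.length - i) := by
  show ((revC c).blocks.take i).sum = _
  have hrev : (revC c).blocks = c.blocks.reverse := rfl
  rw [hrev, List.take_reverse, List.sum_reverse]
  have h1 := List.sum_take_add_sum_drop c.blocks (c.blocks.length - i)
  have h2 : c.blocks.sum = n := c.blocks_sum
  have h3 : c.sizeUpTo (c.length - i) = (c.blocks.take (c.blocks.length - i)).sum := rfl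
  omega

lemma length_rev (c : Composition n) : (revC c).length = c.length :=
  List.length_reverse

lemma touch_rev (hn : 0 < n) (c : Composition n) :
    touchSet (revC c) = (insert n (DesSet c)).image (fun v => n - v) := by
  ext s
  simp only [mem_touchSet, Finset.mem_image, Finset.mem_insert, length_rev]
  constructor
  · rintro ⟨i, hi, rfl⟩
    rw [sizeUpTo_rev]
    rcases Nat.eq_zero_or_pos i with rfl | hipos
    · exact ⟨n, Or.inl rfl, by rw [Nat.sub_zero, c.sizeUpTo_length]⟩
    · refine ⟨c.sizeUpTo (c.length - i), Or.inr ?_, rfl⟩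
      have h1 : c.length - i < c.length := by omega
      have h2 : 0 < c.length - i := by omega
      refine Finset.mem_erase.mpr ⟨?_, mem_touchSet.mpr ⟨_, h1, rfl⟩⟩
      have h3 := sizeUpTo_lt_sizeUpTo c h2 (Nat.sub_le _ _)
      rw [c.sizeUpTo_zero] at h3
      omega
  · rintro ⟨v, hv | hv, rfl⟩
    · subst hv
      refine ⟨0, length_pos hn c, ?_⟩
      rw [sizeUpTo_rev, Nat.sub_zero, c.sizeUpTo_length, Nat.sub_self]
    · rcases Finset.mem_erase.mp hv with ⟨hv0, hvt⟩
      rcases mem_touchSet.mp hvt with ⟨j, hj, rfl⟩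
      have hj0 : 0 < j := by
        rcases Nat.eq_zero_or_pos j with rfl | h
        · exact absurd c.sizeUpTo_zero hv0
        · exact h
      refine ⟨c.length - j, by omega, ?_⟩
      rw [sizeUpTo_rev]
      have hjj : c.length - (c.length - j) = j := by omega
      rw [hjj]

lemma doffC_rev_split (hn : 0 < n) (A B : Composition n) :
    doffC (revC A) (revC B) = NN (DesSet A) (DesSet B) + (DesSet A).card := by
  rw [doff_eq, touch_rev hn A, touch_rev hn B]
  have hA : ∀ x ∈ insert n (DesSet A), x ≤ n := by
    intro x hx
    rcases Finset.mem_insert.mp hx with rfl | hx'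
    · exact le_rfl
    · exact (DesSet_lt hx').le
  have hB : ∀ x ∈ insert n (DesSet B), x ≤ n := by
    intro x hx
    rcases Finset.mem_insert.mp hx with rfl | hx'
    · exact le_rfl
    · exact (DesSet_lt hx').le
  rw [NN_rev hB hA]
  exact NN_insert_top (fun x hx => DesSet_lt hx) (fun x hx => DesSet_lt hx)

end Stmt11Aux

/-- for compositions `γ ≤ α` of `n`,
`∑_{β : γ ≤ β ≤ α} (-1)^{ℓ(α)-ℓ(β)}
  q^{ℓ(α)-ℓ(β) + doff_β(DP(γ)) - doff_{rev α}(DP(rev β))}`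
is `1` if `γ = α` and `0` if `γ < α`. -/
theorem stmt11 (n : ℕ) (γ α : Composition n) (hγ : Refines γ α) :
    ∑ β ∈ Finset.univ.filter fun β : Composition n => Refines γ β ∧ Refines β α,
        ((-1 : F) ^ ((α.length : ℤ) - β.length)) *
          q ^ (((α.length : ℤ) - β.length) + (doffC β γ : ℤ) -
            (doffC (revC α) (revC β) : ℤ)) =
      if γ = α then 1 else 0 := by
  
  classical
  rcases Nat.eq_zero_or_pos n with rfl | hn
  · -- n = 0 : there is a unique composition
    have hb : ∀ c : Composition 0, c.blocks = [] := by
      intro c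
      have hs := c.blocks_sum
      cases hcb : c.blocks with
      | nil => rfl
      | cons a l =>
        have ha := c.blocks_pos (hcb ▸ (List.mem_cons_self : a ∈ a :: l))
        rw [hcb] at hs
        simp only [List.sum_cons] at hs
        omega
    have huniq : ∀ β : Composition 0, β = α := fun β =>
      Composition.ext ((hb β).trans (hb α).symm)
    have hγα : γ = α := huniq γ
    rw [if_pos hγα]
    have hfilter : (Finset.univ.filter fun β : Composition 0 =>
        Refines γ β ∧ Refines β α) = {α} := by
      ext β
      simp only [Finset.mem_filter, Finset.mem_univ, true_and, Finset.mem_singleton]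
      constructor
      · intro _; exact huniq β
      · rintro rfl
        exact ⟨hγα ▸ Finset.Subset.refl _, Finset.Subset.refl _⟩
    rw [hfilter, Finset.sum_singleton]
    have hlen : α.length = 0 := by
      show α.blocks.length = 0
      rw [hb α]
      rfl
    have hlenr : (revC α).length = 0 := by rw [length_rev, hlen]
    have hd1 : doffC α γ = 0 := by unfold doffC; rw [hlen]; simp
    have hd2 : doffC (revC α) (revC α) = 0 := by unfold doffC; rw [hlenr]; simp
    rw [hd1, hd2, hlen]
    norm_num
  · -- n > 0
    have hsub : touchSet α ⊆ touchSet γ := hγ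
    have hqne : (q : F) ≠ 0 := RatFunc.X_ne_zero
    set Dα := DesSet α with hDαdef
    set Dγ := DesSet γ with hDγdef
    set D : Finset ℕ := touchSet γ \ touchSet α with hDdef
    have hDdes : D = Dγ \ Dα := by
      rw [hDdef, hDγdef, hDαdef, DesSet, DesSet]
      ext x
      simp only [Finset.mem_sdiff, Finset.mem_erase]
      constructor
      · rintro ⟨hx, hnx⟩
        have hx0 : x ≠ 0 := fun h => hnx (h ▸ zero_mem_touchSet hn α)
        exact ⟨⟨hx0, hx⟩, fun h => hnx h.2⟩
      · rintro ⟨⟨hx0, hx⟩, hnx⟩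
        exact ⟨hx, fun h => hnx ⟨hx0, h⟩⟩
    have hDsub : Dα ⊆ Dγ := fun x hx => Finset.mem_erase.mpr
      ⟨(Finset.mem_erase.mp hx).1, hsub (Finset.mem_erase.mp hx).2⟩
    have hDlt : ∀ x ∈ D, x < n := fun x hx => touch_lt (Finset.mem_sdiff.mp hx).1
    have hDsubγ : D ⊆ touchSet γ := Finset.sdiff_subset
    set r : ℕ → ℕ := fun t => (D.filter fun s => s < t).card with hrdef
    have hdisjD : Disjoint Dα D :=
      Disjoint.mono_left (Finset.erase_subset 0 (touchSet α)) Finset.disjoint_sdiff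
    have hγunion : Dγ = Dα ∪ D := by
      rw [hDdes]
      exact (Finset.union_sdiff_of_subset hDsub).symm
    -- per-term identity
    have hterm : ∀ β : Composition n, Refines γ β → Refines β α →
        ((-1 : F) ^ ((α.length : ℤ) - β.length)) *
          q ^ (((α.length : ℤ) - β.length) + (doffC β γ : ℤ) -
            (doffC (revC α) (revC β) : ℤ))
        = q ^ ((NN D Dα : ℤ)) * ∏ t ∈ touchSet β \ touchSet α, (-(q ^ (r t))) := by
      intro β h1 h2
      set Dβ := DesSet β with hDβdef
      set T : Finset ℕ := touchSet β \ touchSet α with hTdef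
      have hTDβ : T = Dβ \ Dα := by
        rw [hTdef, hDβdef, hDαdef, DesSet, DesSet]
        ext x
        simp only [Finset.mem_sdiff, Finset.mem_erase]
        constructor
        · rintro ⟨hx, hnx⟩
          have hx0 : x ≠ 0 := fun h => hnx (h ▸ zero_mem_touchSet hn α)
          exact ⟨⟨hx0, hx⟩, fun h => hnx h.2⟩
        · rintro ⟨⟨hx0, hx⟩, hnx⟩
          exact ⟨hx, fun h => hnx ⟨hx0, h⟩⟩
      have hsubβ : Dα ⊆ Dβ := fun x hx => Finset.mem_erase.mpr
        ⟨(Finset.mem_erase.mp hx).1, h2 (Finset.mem_erase.mp hx).2⟩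
      have hdisj : Disjoint Dα T :=
        Disjoint.mono_left (Finset.erase_subset 0 (touchSet α)) Finset.disjoint_sdiff
      have hβunion : Dβ = Dα ∪ T := by
        rw [hTDβ]
        exact (Finset.union_sdiff_of_subset hsubβ).symm
      have f1 : doffC β γ = NN Dγ Dβ + Dβ.card := doffC_split hn β γ
      have f2 : doffC (revC α) (revC β) = NN Dα Dβ + Dα.card := doffC_rev_split hn α β
      have f3 : α.length = Dα.card + 1 := by
        have h3 : Dα.card = α.length - 1 := card_DesSet hn α
        have h4 := length_pos hn α
        omega
      have f4 : β.length = Dβ.card + 1 := by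
        have h3 : Dβ.card = β.length - 1 := card_DesSet hn β
        have h4 := length_pos hn β
        omega
      have f5 : NN Dγ Dβ = NN Dα Dβ + NN D Dβ := by
        conv_lhs => rw [hγunion]
        exact NN_union_left hdisjD
      have f6 : NN D Dβ = NN D Dα + NN D T := by
        conv_lhs => rw [hβunion]
        exact NN_union_right hdisj
      have hcardβ : Dβ.card = Dα.card + T.card := by
        rw [hβunion, Finset.card_union_of_disjoint hdisj]
      have hsign : ((α.length : ℤ) - β.length) = -(T.card : ℤ) := by
        rw [f3, f4]
        push_cast
        omega
      have hexp : (((α.length : ℤ) - β.length) + (doffC β γ : ℤ) -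
          (doffC (revC α) (revC β) : ℤ)) = ((NN D Dα + NN D T : ℕ) : ℤ) := by
        rw [f1, f2, f3, f4, f5, f6]
        push_cast
        omega
      rw [hexp, hsign]
      have h1' : ((-1 : F) ^ (-(T.card : ℤ))) = (-1 : F) ^ (T.card) := by
        rw [zpow_neg, zpow_natCast, ← inv_pow, inv_neg, inv_one]
      have h2' : (q : F) ^ (((NN D Dα + NN D T : ℕ) : ℤ))
          = q ^ ((NN D Dα : ℤ)) * q ^ (NN D T) := by
        rw [Nat.cast_add, zpow_add₀ hqne, zpow_natCast, zpow_natCast]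
      rw [h1', h2']
      have h3' : NN D T = ∑ t ∈ T, r t := NN_swap D T
      have h4' : ∏ t ∈ T, (-(q ^ r t)) = (-1 : F) ^ T.card * ∏ t ∈ T, q ^ r t := by
        calc ∏ t ∈ T, (-(q ^ r t)) = ∏ t ∈ T, ((-1) * q ^ r t) :=
              Finset.prod_congr rfl fun t _ => by ring
          _ = (∏ _t ∈ T, (-1 : F)) * ∏ t ∈ T, q ^ r t := Finset.prod_mul_distrib
          _ = (-1 : F) ^ T.card * ∏ t ∈ T, q ^ r t := by rw [Finset.prod_const]
      rw [h3', h4', Finset.prod_pow_eq_pow_sum]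
      ring
    -- reindex the sum by subsets of D
    have hbij : (∑ β ∈ Finset.univ.filter fun β : Composition n =>
          Refines γ β ∧ Refines β α,
        ((-1 : F) ^ ((α.length : ℤ) - β.length)) *
          q ^ (((α.length : ℤ) - β.length) + (doffC β γ : ℤ) -
            (doffC (revC α) (revC β) : ℤ)))
        = ∑ Tt ∈ D.powerset, q ^ ((NN D Dα : ℤ)) * ∏ t ∈ Tt, (-(q ^ (r t))) := by
      refine Finset.sum_nbij' (fun β => touchSet β \ touchSet α)
        (fun Tt => ofT n (touchSet α ∪ Tt)) ?_ ?_ ?_ ?_ ?_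
      · intro β hβ
        rw [Finset.mem_filter] at hβ
        exact Finset.mem_powerset.mpr (Finset.sdiff_subset_sdiff hβ.2.1 Finset.Subset.rfl)
      · intro Tt hTt
        rw [Finset.mem_powerset] at hTt
        have h0 : 0 ∈ touchSet α ∪ Tt := Finset.mem_union_left _ (zero_mem_touchSet hn α)
        have hltall : ∀ s ∈ touchSet α ∪ Tt, s < n := by
          intro s hs
          rcases Finset.mem_union.mp hs with h | h
          · exact touch_lt h
          · exact hDlt s (hTt h)
        have htouch := touchSet_ofT h0 hltall
        rw [Finset.mem_filter]
        refine ⟨Finset.mem_univ _, ?_, ?_⟩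
        · show touchSet _ ⊆ touchSet γ
          rw [htouch]
          exact Finset.union_subset hsub (hTt.trans hDsubγ)
        · show touchSet α ⊆ touchSet _
          rw [htouch]
          exact Finset.subset_union_left
      · intro β hβ
        rw [Finset.mem_filter] at hβ
        apply touchSet_injective
        have h0 : 0 ∈ touchSet α ∪ (touchSet β \ touchSet α) :=
          Finset.mem_union_left _ (zero_mem_touchSet hn α)
        have hltall : ∀ s ∈ touchSet α ∪ (touchSet β \ touchSet α), s < n := by
          intro s hs
          rcases Finset.mem_union.mp hs with h | h
          · exact touch_lt h
          · exact touch_lt (Finset.mem_sdiff.mp h).1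
        rw [touchSet_ofT h0 hltall, Finset.union_sdiff_of_subset hβ.2.2]
      · intro Tt hTt
        rw [Finset.mem_powerset] at hTt
        have h0 : 0 ∈ touchSet α ∪ Tt := Finset.mem_union_left _ (zero_mem_touchSet hn α)
        have hltall : ∀ s ∈ touchSet α ∪ Tt, s < n := by
          intro s hs
          rcases Finset.mem_union.mp hs with h | h
          · exact touch_lt h
          · exact hDlt s (hTt h)
        have hdisj' : Disjoint (touchSet α) Tt :=
          Disjoint.mono_right hTt Finset.disjoint_sdiff
        show touchSet (ofT n (touchSet α ∪ Tt)) \ touchSet α = Tt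
        rw [touchSet_ofT h0 hltall, Finset.union_sdiff_cancel_left hdisj']
      · intro β hβ
        rw [Finset.mem_filter] at hβ
        exact hterm β hβ.2.1 hβ.2.2
    rw [hbij, ← Finset.mul_sum]
    have hprod : (∑ Tt ∈ D.powerset, ∏ t ∈ Tt, (-(q ^ (r t))))
        = ∏ t ∈ D, (1 - q ^ (r t)) := by
      have hpa := Finset.prod_add (fun t => -(q ^ (r t))) (fun _ => (1 : F)) D
      simp only [Finset.prod_const_one, mul_one] at hpa
      rw [← hpa]
      exact Finset.prod_congr rfl fun t _ => by ring
    rw [hprod]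
    by_cases hγα : γ = α
    · rw [if_pos hγα]
      have hDempty : D = ∅ := by rw [hDdef, hγα, Finset.sdiff_self]
      rw [hDempty, Finset.prod_empty, show NN ∅ Dα = 0 from by simp [NN]]
      norm_num
    · rw [if_neg hγα]
      have hDne : D.Nonempty := by
        by_contra h
        rw [Finset.not_nonempty_iff_eq_empty, hDdef,
          Finset.sdiff_eq_empty_iff_subset] at h
        exact hγα (touchSet_injective (Finset.Subset.antisymm h hsub))
      have hm : D.min' hDne ∈ D := Finset.min'_mem _ _
      have hrm : r (D.min' hDne) = 0 := by
        rw [hrdef]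
        rw [Finset.card_eq_zero, Finset.filter_eq_empty_iff]
        intro s hs
        have := Finset.min'_le D s hs
        omega
      have hzero : (1 : F) - q ^ (r (D.min' hDne)) = 0 := by
        rw [hrm, pow_zero, sub_self]
      rw [Finset.prod_eq_zero hm hzero, mul_zero]
end

section
/- The operators C_m satisfy C_m C_{m+1} = (1/q) C_{m+1} C_m for every integer m. -/
open Finset MvPolynomial

noncomputable section
open Polynomial in
instance : CharZero F := charZero_of_injective_algebraMap (algebraMap ℚ F).injective

lemma qne : q ≠ 0 := RatFunc.X_ne_zero

lemma hh_neg {M : ℤ} (h : M < 0) : hh M = 0 := by simp [hh, not_le.mpr h]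

lemma hh_ofNat (n : ℕ) : hh (n : ℤ) = hN n := by simp [hh]

/-- coefficient sequence: c₀ = 1, c_j = 1-q for j ≥ 1. -/
def cc : ℕ → F := fun j => if j = 0 then 1 else 1 - q

@[simp] lemma cc_zero : cc 0 = 1 := rfl
lemma cc_pos {j : ℕ} (h : j ≠ 0) : cc j = 1 - q := if_neg h

-- Dq basics
lemma Dq_add (r : ℕ) (P Q : SymF) : Dq r (P + Q) = Dq r P + Dq r Q := by
  simp [Dq, map_add]

lemma Dq_smul (r : ℕ) (c : F) (P : SymF) : Dq r (c • P) = c • Dq r P := by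
  simp [Dq, map_smul]

lemma Dq_sum {α : Type*} (r : ℕ) (t : Finset α) (f : α → SymF) :
    Dq r (∑ x ∈ t, f x) = ∑ x ∈ t, Dq r (f x) := by
  simp [Dq, map_sum, Polynomial.finset_sum_coeff]

lemma Dq_one (r : ℕ) : Dq r (1 : SymF) = if r = 0 then 1 else 0 := by
  simp [Dq, map_one, Polynomial.coeff_one]

lemma Dq_C (r : ℕ) (c : F) : Dq r (MvPolynomial.C c) = if r = 0 then MvPolynomial.C c else 0 := by
  have : Tq (MvPolynomial.C c) = Polynomial.C (MvPolynomial.C c) := by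
    simp [Tq, MvPolynomial.aeval_C]
  simp [Dq, this, Polynomial.coeff_C]

lemma Dq_zero_of_lt {P : SymF} {r : ℕ} (h : (Tq P).natDegree < r) : Dq r P = 0 :=
  Polynomial.coeff_eq_zero_of_natDegree_lt h

lemma Tq_pp (k : ℕ) : Tq (pp (k+1)) =
    Polynomial.C (MvPolynomial.X k) +
      Polynomial.C (MvPolynomial.C (1 - q ^ (k + 1))) * Polynomial.X ^ (k + 1) := by
  show Tq (MvPolynomial.X (k+1-1)) = _
  simp only [Nat.add_sub_cancel, Tq, MvPolynomial.aeval_X]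

lemma Dq_pp_mul (j k : ℕ) (R : SymF) :
    Dq j (pp (k+1) * R) = pp (k+1) * Dq j R +
      (if k+1 ≤ j then (1 - q^(k+1)) • Dq (j-(k+1)) R else 0) := by
  unfold Dq
  rw [map_mul, Tq_pp, add_mul, Polynomial.coeff_add, mul_assoc, Polynomial.coeff_C_mul,
    Polynomial.coeff_C_mul, Polynomial.coeff_X_pow_mul']
  rw [show pp (k+1) = MvPolynomial.X k from by simp [pp]]
  split_ifs with h
  · rw [MvPolynomial.smul_eq_C_mul]
  · rw [mul_zero]

lemma hN_newton (m : ℕ) :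
    ∑ k ∈ Finset.range (m+1), pp (k+1) * hN (m - k) = ((m : F) + 1) • hN (m+1) := by
  rw [hN, smul_smul, mul_inv_cancel₀ (Nat.cast_add_one_ne_zero m), one_smul]

lemma newton_hh (n : ℕ) (M : ℤ) (hM : M ≤ (n:ℤ)+1) :
    ∑ k ∈ Finset.range (n+1), pp (k+1) * hh (M - 1 - k) = (M : F) • hh M := by
  rcases lt_or_ge M 1 with h | h
  · have : ∀ k ∈ Finset.range (n+1), pp (k+1) * hh (M - 1 - k) = 0 := by
      intro k _
      rw [hh_neg (by omega), mul_zero]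
    rw [Finset.sum_eq_zero this]
    rcases eq_or_lt_of_le (by omega : M ≤ 0) with rfl | h'
    · simp
    · rw [hh_neg h', smul_zero]
  · obtain ⟨m, rfl⟩ : ∃ m : ℕ, M = (m : ℤ) + 1 := ⟨(M-1).toNat, by omega⟩
    have hmn : m ≤ n := by exact_mod_cast (by omega : (m:ℤ) ≤ n)
    have hsub : ∀ k ∈ Finset.range (m+1),
        pp (k+1) * hh ((m:ℤ) + 1 - 1 - k) = pp (k+1) * hN (m - k) := by
      intro k hk
      rw [Finset.mem_range] at hk
      congr 1
      rw [show (m:ℤ) + 1 - 1 - k = ((m - k : ℕ) : ℤ) by omega, hh_ofNat]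
    rw [← Finset.sum_subset (Finset.range_subset_range.mpr (by omega : m+1 ≤ n+1))
        (by intro k _ hk; rw [Finset.mem_range, not_lt] at hk
            rw [hh_neg (by omega), mul_zero]),
      Finset.sum_congr rfl hsub, hN_newton,
      show ((m:ℤ)+1) = ((m+1 : ℕ) : ℤ) by omega, hh_ofNat]
    push_cast
    ring_nf

lemma geom_aux (j : ℕ) :
    ∑ k ∈ Finset.range j, (1 - q^(k+1)) * (1 - q) = (j:F)*(1-q) - q*(1 - q^j) := by
  induction j with
  | zero => simp
  | succ n ih =>
    rw [Finset.sum_range_succ, ih]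
    push_cast
    ring

lemma scalar_S (j : ℕ) (hj : 1 ≤ j) :
    ∑ k ∈ Finset.range j, (1 - q^(k+1)) * cc (j-1-k) = (j : F) * (1 - q) := by
  have key : ∀ k ∈ Finset.range j, (1 - q^(k+1)) * cc (j-1-k)
      = (1-q^(k+1))*(1-q) + (if k = j-1 then (1-q^(k+1))*q else 0) := by
    intro k hk
    rw [Finset.mem_range] at hk
    rcases eq_or_ne k (j-1) with rfl | hne
    · rw [if_pos rfl, Nat.sub_self, cc_zero]
      ring
    · rw [if_neg hne, cc_pos (by omega), add_zero]
  rw [Finset.sum_congr rfl key, Finset.sum_add_distrib, geom_aux,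
    Finset.sum_ite_eq' (Finset.range j) (j-1) (fun k => (1-q^(k+1))*q),
    if_pos (Finset.mem_range.mpr (by omega)), show j - 1 + 1 = j from by omega]
  ring

lemma hh_zero_nat : hh (0:ℤ) = 1 := by
  rw [show ((0:ℤ)) = ((0:ℕ):ℤ) from rfl, hh_ofNat, hN]

lemma Dq_hN (n : ℕ) : ∀ j, Dq j (hN n) = cc j • hh ((n:ℤ) - j) := by
  induction n using Nat.strong_induction_on with
  | _ n ih =>
  intro j
  obtain _ | m := n
  · rw [show hN 0 = 1 from by rw [hN], Dq_one]
    rcases eq_or_ne j 0 with rfl | h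
    · rw [if_pos rfl, cc_zero, one_smul]
      simp [hh_zero_nat]
    · rw [if_neg h, hh_neg (by omega), smul_zero]
  · rw [show ((m+1:ℕ):ℤ) - (j:ℤ) = ((m:ℤ)+1-j) from by push_cast; ring]
    have step : ∀ k ∈ Finset.range (m+1),
        Dq j (pp (k+1) * hN (m-k)) =
          cc j • (pp (k+1) * hh (((m:ℤ)+1-j) - 1 - k)) +
          (if k+1 ≤ j then ((1-q^(k+1)) * cc (j-1-k)) else 0) • hh ((m:ℤ)+1-j) := by
      intro k hk
      rw [Finset.mem_range] at hk
      have e1 : ((m - k : ℕ):ℤ) - (j:ℕ) = ((m:ℤ)+1-j) - 1 - k := by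
        push_cast [Nat.cast_sub (by omega : k ≤ m)]
        ring
      rw [Dq_pp_mul, ih (m-k) (by omega) j, e1, mul_smul_comm]
      congr 1
      rcases le_or_gt (k+1) j with h | h
      · rw [if_pos h, if_pos h, show j-1-k = j-(k+1) from by omega,
          ih (m-k) (by omega) (j-(k+1))]
        have e2 : ((m-k:ℕ):ℤ) - ((j-(k+1):ℕ):ℤ) = (m:ℤ)+1-j := by
          push_cast [Nat.cast_sub (by omega : k ≤ m), Nat.cast_sub h]
          ring
        rw [e2, smul_smul]
      · rw [if_neg (by omega), if_neg (show ¬ k+1 ≤ j by omega), zero_smul]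
    rw [hN, Dq_smul, Dq_sum, Finset.sum_congr rfl step, Finset.sum_add_distrib,
      ← Finset.smul_sum, ← Finset.sum_smul,
      newton_hh m ((m:ℤ)+1-j) (by omega)]
    rcases le_or_gt ((j:ℤ)) ((m:ℤ)+1) with hj | hj
    · have hT : (∑ k ∈ Finset.range (m+1),
          if k+1 ≤ j then ((1-q^(k+1)) * cc (j-1-k)) else 0) = (j:F) * (1-q) := by
        rcases eq_or_ne j 0 with rfl | hj0
        · simp
        · rw [← Finset.sum_subset (Finset.range_subset_range.mpr (show j ≤ m+1 by omega))
              (fun k _ hk => by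
                rw [Finset.mem_range, not_lt] at hk
                exact if_neg (by omega)),
            Finset.sum_congr rfl (fun k hk => if_pos (by
              rw [Finset.mem_range] at hk; omega)),
            scalar_S j (by omega)]
      rw [hT, smul_smul, ← add_smul, smul_smul]
      have hsc : ((m:F)+1)⁻¹ * (cc j * ((((m:ℤ)+1-(j:ℤ)) : ℤ):F) + (j:F)*(1-q)) = cc j := by
        have hm1 : ((m:F)+1) ≠ 0 := Nat.cast_add_one_ne_zero m
        rcases eq_or_ne j 0 with rfl | hj0
        · push_cast
          field_simp
          ring
        · rw [cc_pos hj0]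
          push_cast
          field_simp
          ring
      rw [hsc]
    · rw [hh_neg (by omega)]
      simp

lemma Dq_zero' (r : ℕ) : Dq r (0 : SymF) = 0 := by simp [Dq]

lemma Dq_hh (M : ℤ) (j : ℕ) : Dq j (hh M) = cc j • hh (M - j) := by
  rcases lt_or_ge M 0 with h | h
  · rw [hh_neg h, hh_neg (by omega), Dq_zero', smul_zero]
  · obtain ⟨n, rfl⟩ := Int.eq_ofNat_of_zero_le h
    rw [hh_ofNat, Dq_hN]

lemma Dq_X_mul (j k : ℕ) (R : SymF) :
    Dq j (MvPolynomial.X k * R) = MvPolynomial.X k * Dq j R +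
      (if k+1 ≤ j then (1 - q^(k+1)) • Dq (j-(k+1)) R else 0) := by
  have := Dq_pp_mul j k R
  rwa [show pp (k+1) = MvPolynomial.X k from by simp [pp]] at this

lemma Dq_comm (P : SymF) : ∀ a s, Dq a (Dq s P) = Dq s (Dq a P) := by
  induction P using MvPolynomial.induction_on with
  | C c =>
    intro a s
    simp only [Dq_C, apply_ite (Dq a), apply_ite (Dq s), Dq_zero']
    split_ifs <;> simp
  | add p r hp hr =>
    intro a s
    rw [Dq_add, Dq_add, Dq_add, Dq_add, hp, hr]
  | mul_X p k hp =>
    intro a s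
    rw [mul_comm p (MvPolynomial.X k), Dq_X_mul s k p, Dq_X_mul a k p,
      Dq_add, Dq_add, Dq_X_mul a, Dq_X_mul s,
      apply_ite (Dq a), apply_ite (Dq s), Dq_zero', Dq_zero', Dq_smul, Dq_smul,
      hp a s, hp (a-(k+1)) s, hp a (s-(k+1))]
    abel

noncomputable def GG (M N : ℤ) : SymF :=
  ∑ j ∈ Finset.range (N.toNat + 1), ((q⁻¹:F)^j) • (hh (M+j) * hh (N-j))

noncomputable def FF (M N : ℤ) : SymF :=
  ∑ j ∈ Finset.range (N.toNat + 1), (cc j * (q⁻¹:F)^j) • (hh (M+j) * hh (N-j))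

lemma FF_eq_sum (M N : ℤ) (J : ℕ) (hJ : N.toNat + 1 ≤ J) :
    FF M N = ∑ j ∈ Finset.range J, (cc j * (q⁻¹:F)^j) • (hh (M+j) * hh (N-j)) := by
  apply Finset.sum_subset (Finset.range_subset_range.mpr hJ)
  intro j _ hj
  rw [Finset.mem_range, not_lt] at hj
  rw [hh_neg (show N - (j:ℤ) < 0 by omega), mul_zero, smul_zero]

lemma FF_GG (M N : ℤ) : FF M N = (1-q) • GG M N + q • (hh M * hh N) := by
  unfold FF GG
  rw [Finset.smul_sum,
    Finset.sum_range_succ' (fun j => (cc j * (q⁻¹:F)^j) • (hh (M+j) * hh (N-j))) N.toNat,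
    Finset.sum_range_succ' (fun j => (1-q) • (((q⁻¹:F)^j) • (hh (M+j) * hh (N-j)))) N.toNat]
  have e1 : ∀ i ∈ Finset.range N.toNat,
      (cc (i+1) * (q⁻¹:F)^(i+1)) • (hh (M+(i+1:ℕ)) * hh (N-(i+1:ℕ)))
      = (1-q) • (((q⁻¹:F)^(i+1)) • (hh (M+(i+1:ℕ)) * hh (N-(i+1:ℕ)))) := fun i _ => by
    rw [smul_smul, cc_pos (by omega : i+1 ≠ 0)]
  rw [Finset.sum_congr rfl e1]
  simp only [cc_zero, one_mul, pow_zero, one_smul, Nat.cast_zero, add_zero, sub_zero]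
  simp only [MvPolynomial.smul_eq_C_mul, map_sub, map_mul, map_one]
  ring

lemma GG_shift (M N : ℤ) : q • GG M N = GG (M+1) (N-1) + q • (hh M * hh N) := by
  rcases lt_or_ge N 1 with h | h
  · have hN0 : N.toNat = 0 := by omega
    have h1 : (N-1).toNat = 0 := by omega
    unfold GG
    rw [hN0, h1]
    simp only [zero_add, Finset.range_one, Finset.sum_singleton, pow_zero, one_smul,
      Nat.cast_zero, add_zero, sub_zero]
    rw [hh_neg (by omega : N - 1 < 0), mul_zero, zero_add]
  · have hNt : N.toNat = (N-1).toNat + 1 := by omega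
    unfold GG
    rw [hNt, Finset.smul_sum,
      Finset.sum_range_succ' (fun j => q • (((q⁻¹:F)^j) • (hh (M+j) * hh (N-j))))
        ((N-1).toNat + 1)]
    congr 1
    · refine Finset.sum_congr rfl fun i _ => ?_
      rw [smul_smul, show q * (q⁻¹:F)^(i+1) = (q⁻¹:F)^i from by
          rw [pow_succ, ← mul_assoc, mul_comm q, mul_assoc, mul_inv_cancel₀ qne, mul_one],
        show M + ((i+1:ℕ):ℤ) = (M+1) + (i:ℕ) from by push_cast; ring,
        show N - ((i+1:ℕ):ℤ) = (N-1) - (i:ℕ) from by push_cast; ring]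
    · simp only [pow_zero, one_smul, Nat.cast_zero, add_zero, sub_zero]

lemma FF_shift (M N : ℤ) : q • FF M N =
    FF (M+1) (N-1) + q • (hh M * hh N) - q • (hh (M+1) * hh (N-1)) := by
  have h2 : GG (M+1) (N-1) = q • GG M N - q • (hh M * hh N) := by
    rw [GG_shift M N]
    abel
  rw [FF_GG M N, FF_GG (M+1) (N-1), h2]
  simp only [MvPolynomial.smul_eq_C_mul, map_sub, map_mul, map_one]
  ring

lemma sum_triangle {M : Type*} [AddCommMonoid M] (n : ℕ) (f : ℕ → ℕ → M) :
    ∑ r ∈ Finset.range n, ∑ j ∈ Finset.range (r+1), f r j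
      = ∑ j ∈ Finset.range n, ∑ a ∈ Finset.range (n-j), f (j+a) j := by
  induction n with
  | zero => simp
  | succ n ih =>
    rw [Finset.sum_range_succ, ih]
    have h1 : ∀ j ∈ Finset.range (n+1), ∑ a ∈ Finset.range (n+1-j), f (j+a) j
        = ∑ a ∈ Finset.range (n-j), f (j+a) j + f n j := by
      intro j hj
      rw [Finset.mem_range] at hj
      rw [show n+1-j = (n-j)+1 from by omega, Finset.sum_range_succ,
        show j+(n-j) = n from by omega]
    rw [Finset.sum_congr rfl h1, Finset.sum_add_distrib]
    congr 1
    rw [Finset.sum_range_succ, Nat.sub_self, Finset.range_zero, Finset.sum_empty, add_zero]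

lemma Dq_hh_mul (r : ℕ) (M : ℤ) (Q : SymF) :
    Dq r (hh M * Q) = ∑ j ∈ Finset.range (r+1), cc j • (hh (M - j) * Dq (r-j) Q) := by
  unfold Dq
  rw [map_mul, Polynomial.coeff_mul, Finset.Nat.sum_antidiagonal_eq_sum_range_succ_mk]
  refine Finset.sum_congr rfl fun j hj => ?_
  rw [show (Tq (hh M)).coeff j = Dq j (hh M) from rfl, Dq_hh, smul_mul_assoc]

lemma Cop_eq_sum (u : ℤ) (Q : SymF) (N : ℕ) (h : (Tq Q).natDegree < N) :
    Cop u Q = ((-q⁻¹ : F) ^ (u - 1)) •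
      ∑ r ∈ Finset.range N, ((q⁻¹:F) ^ r) • (hh (u + r) * Dq r Q) := by
  unfold Cop
  congr 1
  apply Finset.sum_subset (Finset.range_subset_range.mpr h)
  intro r _ hr
  rw [Finset.mem_range, not_lt] at hr
  rw [Dq_zero_of_lt (by omega), mul_zero, smul_zero]

lemma expansion (P : SymF) (u v : ℤ) (NB : ℕ)
    (hNB1 : (Tq P).natDegree + 1 ≤ NB)
    (hNB2 : ∀ s, s < (Tq P).natDegree + 1 → ∀ a, NB ≤ a → Dq a (Dq s P) = 0) :
    Cop u (Cop v P) = ((-q⁻¹ : F) ^ (u - 1) * (-q⁻¹ : F) ^ (v - 1)) •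
      ∑ a ∈ Finset.range NB, ∑ s ∈ Finset.range NB,
        ((q⁻¹:F) ^ (a+s)) • (FF (u + a) (v + s) * Dq a (Dq s P)) := by
  set NP := (Tq P).natDegree + 1 with hNP
  set J := (v + (NP:ℤ)).toNat + 1 with hJdef
  set NR := max (NB + J) ((Tq (Cop v P)).natDegree + 1) with hNRdef
  rw [Cop_eq_sum u (Cop v P) NR (by omega)]
  have hB : ∀ r, Dq r (Cop v P) =
      (-q⁻¹:F)^(v-1) • ∑ s ∈ Finset.range NP, ∑ j ∈ Finset.range (r+1),
        ((q⁻¹:F)^s * cc j) • (hh (v+s-j) * Dq (r-j) (Dq s P)) := by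
    intro r
    rw [Cop_eq_sum v P NP (by omega), Dq_smul, Dq_sum]
    congr 1
    refine Finset.sum_congr rfl fun s _ => ?_
    rw [Dq_smul, Dq_hh_mul, Finset.smul_sum]
    exact Finset.sum_congr rfl fun j _ => by rw [smul_smul]
  have key : (∑ r ∈ Finset.range NR, ((q⁻¹:F)^r) • (hh (u+r) * Dq r (Cop v P)))
      = (-q⁻¹:F)^(v-1) • ∑ a ∈ Finset.range NB, ∑ s ∈ Finset.range NB,
        ((q⁻¹:F) ^ (a+s)) • (FF (u + a) (v + s) * Dq a (Dq s P)) := by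
    have step1 : (∑ r ∈ Finset.range NR, ((q⁻¹:F)^r) • (hh (u+r) * Dq r (Cop v P)))
        = (-q⁻¹:F)^(v-1) • ∑ r ∈ Finset.range NR, ∑ s ∈ Finset.range NP,
            ∑ j ∈ Finset.range (r+1),
            (((q⁻¹:F)^r) * ((q⁻¹:F)^s * cc j)) •
              (hh (u+r) * (hh (v+s-j) * Dq (r-j) (Dq s P))) := by
      rw [Finset.smul_sum]
      refine Finset.sum_congr rfl fun r _ => ?_
      rw [hB r, mul_smul_comm, smul_comm, Finset.mul_sum, Finset.smul_sum]
      congr 1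
      refine Finset.sum_congr rfl fun s _ => ?_
      rw [Finset.mul_sum, Finset.smul_sum]
      exact Finset.sum_congr rfl fun j _ => by rw [mul_smul_comm, smul_smul]
    rw [step1]
    congr 1
    rw [Finset.sum_comm]
    have step2 : ∀ s ∈ Finset.range NP,
        (∑ r ∈ Finset.range NR, ∑ j ∈ Finset.range (r+1),
            (((q⁻¹:F)^r) * ((q⁻¹:F)^s * cc j)) •
              (hh (u+r) * (hh (v+s-j) * Dq (r-j) (Dq s P))))
        = ∑ a ∈ Finset.range NB, ((q⁻¹:F) ^ (a+s)) • (FF (u + a) (v + s) * Dq a (Dq s P)) := by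
      intro s hs
      rw [Finset.mem_range] at hs
      rw [sum_triangle NR (fun r j => (((q⁻¹:F)^r) * ((q⁻¹:F)^s * cc j)) •
              (hh (u+r) * (hh (v+s-j) * Dq (r-j) (Dq s P))))]
      have hV1 : ∀ j a, NB ≤ a →
          (((q⁻¹:F)^(j+a)) * ((q⁻¹:F)^s * cc j)) •
            (hh (u+(j+a:ℕ)) * (hh (v+s-j) * Dq ((j+a)-j) (Dq s P))) = 0 := by
        intro j a ha
        rw [show (j+a)-j = a from by omega, hNB2 s hs a ha, mul_zero, mul_zero, smul_zero]
      have hV2 : ∀ j, J ≤ j → ∀ a,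
          (((q⁻¹:F)^(j+a)) * ((q⁻¹:F)^s * cc j)) •
            (hh (u+(j+a:ℕ)) * (hh (v+s-j) * Dq ((j+a)-j) (Dq s P))) = 0 := by
        intro j hj a
        rw [hh_neg (show v+(s:ℤ)-(j:ℤ) < 0 by omega), zero_mul, mul_zero, smul_zero]
      have htrim : (∑ j ∈ Finset.range NR, ∑ a ∈ Finset.range (NR-j),
            (((q⁻¹:F)^(j+a)) * ((q⁻¹:F)^s * cc j)) •
              (hh (u+(j+a:ℕ)) * (hh (v+s-j) * Dq ((j+a)-j) (Dq s P))))
          = ∑ j ∈ Finset.range J, ∑ a ∈ Finset.range NB,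
            (((q⁻¹:F)^(j+a)) * ((q⁻¹:F)^s * cc j)) •
              (hh (u+(j+a:ℕ)) * (hh (v+s-j) * Dq ((j+a)-j) (Dq s P))) := by
        rw [← Finset.sum_subset (Finset.range_subset_range.mpr (show J ≤ NR by omega))
            (fun j _ hj => Finset.sum_eq_zero (fun a _ =>
              hV2 j (by rw [Finset.mem_range, not_lt] at hj; omega) a))]
        refine Finset.sum_congr rfl fun j hj => ?_
        rw [Finset.mem_range] at hj
        rw [← Finset.sum_subset (Finset.range_subset_range.mpr (show NB ≤ NR - j by omega))
            (fun a _ ha => hV1 j a (by rw [Finset.mem_range, not_lt] at ha; exact ha))]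
      rw [htrim, Finset.sum_comm]
      refine Finset.sum_congr rfl fun a _ => ?_
      rw [FF_eq_sum (u+a) (v+s) J (by omega), Finset.sum_mul, Finset.smul_sum]
      refine Finset.sum_congr rfl fun j _ => ?_
      rw [show (j+a)-j = a from by omega,
        show u + ((j+a:ℕ):ℤ) = u + (a:ℕ) + (j:ℕ) from by push_cast; ring,
        ← mul_assoc, smul_mul_assoc, smul_smul]
      congr 1
      · ring
      · rw [mul_assoc]
    rw [Finset.sum_congr rfl step2, Finset.sum_comm]
    refine Finset.sum_congr rfl fun a _ => ?_
    apply Finset.sum_subset (Finset.range_subset_range.mpr hNB1)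
    intro s _ hsn
    rw [Finset.mem_range, not_lt] at hsn
    rw [Dq_zero_of_lt (show (Tq P).natDegree < s by omega), Dq_zero', mul_zero, smul_zero]
  rw [key, smul_smul]

theorem stmt14' (m : ℤ) (P : SymF) :
    Cop m (Cop (m + 1) P) = q⁻¹ • Cop (m + 1) (Cop m P) := by
  set NP := (Tq P).natDegree + 1 with hNPdef
  set NB := NP + (Finset.range NP).sup (fun s => (Tq (Dq s P)).natDegree) + 1 with hNBdef
  have hNB1 : NP ≤ NB := by omega
  have hNB2 : ∀ s, s < NP → ∀ a, NB ≤ a → Dq a (Dq s P) = 0 := by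
    intro s hs a ha
    apply Dq_zero_of_lt
    have h : (Tq (Dq s P)).natDegree ≤ (Finset.range NP).sup (fun s => (Tq (Dq s P)).natDegree) :=
      Finset.le_sup (f := fun t => (Tq (Dq t P)).natDegree) (Finset.mem_range.mpr hs)
    omega
  have e1 := expansion P m (m+1) NB hNB1 hNB2
  have e2 := expansion P (m+1) m NB hNB1 hNB2
  have hasym : (∑ a ∈ Finset.range NB, ∑ s ∈ Finset.range NB,
      ((q⁻¹:F)^(a+s)) • ((q•(hh (m+↑a) * hh (m+1+↑s)) - q•(hh (m+1+↑a) * hh (m+↑s)))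
        * Dq a (Dq s P))) = 0 := by
    set R := ∑ a ∈ Finset.range NB, ∑ s ∈ Finset.range NB,
      ((q⁻¹:F)^(a+s)) • ((q•(hh (m+↑a) * hh (m+1+↑s)) - q•(hh (m+1+↑a) * hh (m+↑s)))
        * Dq a (Dq s P)) with hR
    have h2 : R = -R := by
      nth_rewrite 1 [hR]
      rw [Finset.sum_comm]
      rw [show (∑ s ∈ Finset.range NB, ∑ a ∈ Finset.range NB,
          ((q⁻¹:F)^(a+s)) • ((q•(hh (m+↑a) * hh (m+1+↑s)) - q•(hh (m+1+↑a) * hh (m+↑s)))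
            * Dq a (Dq s P)))
        = ∑ a ∈ Finset.range NB, ∑ s ∈ Finset.range NB,
          ((q⁻¹:F)^(s+a)) • ((q•(hh (m+↑s) * hh (m+1+↑a)) - q•(hh (m+1+↑s) * hh (m+↑a)))
            * Dq s (Dq a P)) from rfl]
      rw [← Finset.sum_neg_distrib]
      refine Finset.sum_congr rfl fun a _ => ?_
      rw [← Finset.sum_neg_distrib]
      refine Finset.sum_congr rfl fun s _ => ?_
      rw [Dq_comm P s a, show s+a = a+s from Nat.add_comm s a]
      simp only [MvPolynomial.smul_eq_C_mul]
      ring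
    exact add_self_eq_zero.mp (eq_neg_iff_add_eq_zero.mp h2)
  have hterm : ∀ a s : ℕ, q • (((q⁻¹:F)^(a+s)) • (FF (m+↑a) (m+1+↑s) * Dq a (Dq s P)))
      = ((q⁻¹:F)^(a+s)) • (FF (m+1+↑a) (m+↑s) * Dq a (Dq s P))
        + ((q⁻¹:F)^(a+s)) • ((q•(hh (m+↑a) * hh (m+1+↑s)) - q•(hh (m+1+↑a) * hh (m+↑s)))
            * Dq a (Dq s P)) := by
    intro a s
    have h := FF_shift (m+↑a) (m+1+↑s)
    rw [show m+(a:ℤ)+1 = m+1+↑a from by ring, show m+1+(s:ℤ)-1 = m+↑s from by ring] at h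
    rw [smul_comm, ← smul_mul_assoc, h, add_sub_assoc, add_mul, smul_add]
  have hXY : q • (∑ a ∈ Finset.range NB, ∑ s ∈ Finset.range NB,
        ((q⁻¹:F)^(a+s)) • (FF (m+↑a) (m+1+↑s) * Dq a (Dq s P)))
      = ∑ a ∈ Finset.range NB, ∑ s ∈ Finset.range NB,
        ((q⁻¹:F)^(a+s)) • (FF (m+1+↑a) (m+↑s) * Dq a (Dq s P)) := by
    rw [Finset.smul_sum]
    calc (∑ a ∈ Finset.range NB, q • ∑ s ∈ Finset.range NB,
          ((q⁻¹:F)^(a+s)) • (FF (m+↑a) (m+1+↑s) * Dq a (Dq s P)))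
        = ∑ a ∈ Finset.range NB, ∑ s ∈ Finset.range NB,
            (((q⁻¹:F)^(a+s)) • (FF (m+1+↑a) (m+↑s) * Dq a (Dq s P))
              + ((q⁻¹:F)^(a+s)) • ((q•(hh (m+↑a) * hh (m+1+↑s)) - q•(hh (m+1+↑a) * hh (m+↑s)))
                  * Dq a (Dq s P))) := by
          refine Finset.sum_congr rfl fun a _ => ?_
          rw [Finset.smul_sum]
          exact Finset.sum_congr rfl fun s _ => hterm a s
      _ = _ := by
          rw [Finset.sum_congr rfl (fun a (_ : a ∈ Finset.range NB) => Finset.sum_add_distrib),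
            Finset.sum_add_distrib, hasym, add_zero]
  rw [e1, e2, ← hXY, smul_smul, smul_smul]
  congr 1
  rw [mul_comm (q⁻¹:F), mul_assoc, inv_mul_cancel₀ qne, mul_one, mul_comm]

/-- `ℂ_m ℂ_{m+1} = (1/q) ℂ_{m+1} ℂ_m` for every `m ∈ ℤ`. -/
theorem stmt14 (m : ℤ) (P : SymF) :
    Cop m (Cop (m + 1) P) = q⁻¹ • Cop (m + 1) (Cop m P) := by
  exact stmt14' m P
end
end
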